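/- Let k be a field and let S ⊆ k[x,y] be the set of nonzero polynomials in the variable x only, and T ⊆ k[x,y] the set of nonzero polynomials in the variable y only. Then, inside the fraction field k(x,y), the intersection of the localizations S⁻¹k[x,y] and T⁻¹k[x,y] equals k[x,y]. -/
import Mathlib


open MvPolynomial

private lemma degreeOf_mul_eq' {k : Type} [Field k] {n : ℕ}
    {p q : MvPolynomial (Fin (n + 1)) k} (hp : p ≠ 0) (hq : q ≠ 0) :
    degreeOf 0 (p * q) = degreeOf 0 p + degreeOf 0 q := by
  have hp' : finSuccEquiv k n p ≠ 0 := by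
    simpa using (EmbeddingLike.map_ne_zero_iff (f := (finSuccEquiv k n : _ ≃ₐ[k] _))).mpr hp
  have hq' : finSuccEquiv k n q ≠ 0 := by
    simpa using (EmbeddingLike.map_ne_zero_iff (f := (finSuccEquiv k n : _ ≃ₐ[k] _))).mpr hq
  rw [← natDegree_finSuccEquiv, ← natDegree_finSuccEquiv, ← natDegree_finSuccEquiv, map_mul,
    Polynomial.natDegree_mul hp' hq']

private lemma degreeOf_mul_eq2 {k : Type} [Field k] (i : Fin 2)
    {p q : MvPolynomial (Fin 2) k} (hp : p ≠ 0) (hq : q ≠ 0) :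
    degreeOf i (p * q) = degreeOf i p + degreeOf i q := by
  fin_cases i
  · exact degreeOf_mul_eq' hp hq
  · set f : Fin 2 → Fin 2 := ⇑(Equiv.swap (0 : Fin 2) 1) with hf
    have hfi : Function.Injective f := (Equiv.swap (0 : Fin 2) 1).injective
    have key : ∀ r : MvPolynomial (Fin 2) k, degreeOf (1 : Fin 2) r = degreeOf 0 (rename f r) := by
      intro r
      have := degreeOf_rename_of_injective (p := r) hfi (1 : Fin 2)
      have hf1 : f 1 = 0 := Equiv.swap_apply_right 0 1
      rw [hf1] at this
      exact this.symm
    have hrp : rename f p ≠ 0 := fun h => hp ((rename_injective f hfi) (by simpa using h))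
    have hrq : rename f q ≠ 0 := fun h => hq ((rename_injective f hfi) (by simpa using h))
    rw [show (⟨1, by norm_num⟩ : Fin 2) = (1 : Fin 2) from rfl]
    rw [key, key, key, map_mul]
    exact degreeOf_mul_eq' hrp hrq

private lemma degreeOf_eq_zero_of_dvd {k : Type} [Field k] {i : Fin 2}
    {d s : MvPolynomial (Fin 2) k} (hs : s ≠ 0) (hdvd : d ∣ s) (h : degreeOf i s = 0) :
    degreeOf i d = 0 := by
  obtain ⟨e, rfl⟩ := hdvd
  have hd : d ≠ 0 := fun h0 => hs (by simp [h0])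
  have he : e ≠ 0 := fun h0 => hs (by simp [h0])
  have := degreeOf_mul_eq2 i hd he
  omega

private lemma degreeOf_one_eq_zero_of_adjoin {k : Type} [Field k]
    {p : MvPolynomial (Fin 2) k} (i j : Fin 2) (hij : i ≠ j)
    (hp : p ∈ Algebra.adjoin k ({X i} : Set (MvPolynomial (Fin 2) k))) :
    degreeOf j p = 0 := by
  have hsup : p ∈ supported k ({i} : Set (Fin 2)) := by
    rwa [supported, Set.image_singleton]
  rw [mem_supported] at hsup
  have hj : j ∉ p.vars := fun hmem => hij (Set.eq_of_mem_singleton (hsup hmem)).symm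
  classical
  rw [degreeOf_def]
  rw [vars_def, Multiset.mem_toFinset] at hj
  exact Multiset.count_eq_zero_of_notMem hj

private lemma relprime_aux {k : Type} [Field k] {s t : MvPolynomial (Fin 2) k}
    (hs0 : s ≠ 0) (ht0 : t ≠ 0)
    (hs : degreeOf 1 s = 0) (ht : degreeOf 0 t = 0) :
    IsRelPrime s t := by
  intro d hds hdt
  have hd0 : d ≠ 0 := fun h0 => hs0 (by
    obtain ⟨e, rfl⟩ := hds
    simp [h0])
  have h1 : degreeOf (1 : Fin 2) d = 0 := degreeOf_eq_zero_of_dvd hs0 hds hs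
  have h0 : degreeOf (0 : Fin 2) d = 0 := degreeOf_eq_zero_of_dvd ht0 hdt ht
  have hvars : d.vars = ∅ := by
    classical
    rw [Finset.eq_empty_iff_forall_notMem]
    intro i hi
    rw [vars_def, Multiset.mem_toFinset, ← Multiset.count_ne_zero] at hi
    fin_cases i
    · exact hi (by rw [← degreeOf_def]; exact h0)
    · exact hi (by rw [← degreeOf_def]; exact h1)
  have hd : d ∈ supported k (∅ : Set (Fin 2)) := by
    rw [mem_supported, hvars]; simp
  rw [supported_empty, Algebra.mem_bot] at hd
  obtain ⟨c, hc⟩ := hd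
  have hc0 : c ≠ 0 := fun h0 => hd0 (by simp [← hc, h0, Algebra.algebraMap_self])
  rw [← hc]
  exact (isUnit_iff_ne_zero.mpr hc0).map (algebraMap k (MvPolynomial (Fin 2) k))

/-- Inside `k(x,y)`, the intersection of the localization of `k[x,y]` at the nonzero
polynomials in `x` alone with the localization at the nonzero polynomials in `y` alone
is `k[x,y]` itself. -/
theorem stmt_5 (k : Type) [Field k] :
    letI R := MvPolynomial (Fin 2) k
    letI K := FractionRing R
    letI S : Set R := {p | p ≠ 0 ∧ p ∈ Algebra.adjoin k ({X 0} : Set R)}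
    letI T : Set R := {p | p ≠ 0 ∧ p ∈ Algebra.adjoin k ({X 1} : Set R)}
    {z : K | ∃ p s, s ∈ S ∧ z * algebraMap R K s = algebraMap R K p} ∩
      {z : K | ∃ p t, t ∈ T ∧ z * algebraMap R K t = algebraMap R K p} =
      Set.range (algebraMap R K) := by
  set R := MvPolynomial (Fin 2) k with hR
  set K := FractionRing R with hK
  have hinj : Function.Injective (algebraMap R K) := IsFractionRing.injective R K
  ext z
  simp only [Set.mem_inter_iff, Set.mem_setOf_eq, Set.mem_range]
  constructor
  · rintro ⟨⟨p, s, ⟨hs0, hsS⟩, hps⟩, ⟨q, t, ⟨ht0, htT⟩, hqt⟩⟩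
    have hsdeg : degreeOf 1 s = 0 :=
      degreeOf_one_eq_zero_of_adjoin 0 1 (by decide) hsS
    have htdeg : degreeOf 0 t = 0 :=
      degreeOf_one_eq_zero_of_adjoin 1 0 (by decide) htT
    have hrel : IsRelPrime s t := relprime_aux hs0 ht0 hsdeg htdeg
    have hkey : p * t = q * s := by
      apply hinj
      rw [map_mul, map_mul, ← hps, ← hqt]
      ring
    have hdvd : s ∣ p * t := ⟨q, by rw [hkey]; ring⟩
    obtain ⟨u, hu⟩ := hrel.dvd_of_dvd_mul_right hdvd
    refine ⟨u, ?_⟩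
    have hmaps : algebraMap R K s ≠ 0 := fun h0 => hs0 (hinj (by simpa using h0))
    have : z * algebraMap R K s = algebraMap R K u * algebraMap R K s := by
      rw [hps, hu, map_mul]; ring
    exact (mul_right_cancel₀ hmaps this).symm
  · rintro ⟨p, rfl⟩
    refine ⟨⟨p, 1, ⟨one_ne_zero, one_mem _⟩, by simp⟩,
      ⟨p, 1, ⟨one_ne_zero, one_mem _⟩, by simp⟩⟩
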